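/- arXiv:2509.22219 — 2 statements merged into one kernel-verified Lean document; each statement's English description precedes it below -/
import Mathlib

section
/- Let n = 2M, A ∈ SO(n), λ ∈ ℝᴹ, and B = Aᵀ(⊕ᵢ λᵢ J)A. Let Ψ : ℝⁿ → ℝᵐ satisfy Ψ(exp(tB)·x) = Ψ(x) for all t ∈ ℝ and all x ∈ ℝⁿ. Then there exists φ : ℝⁿ → ℝᵐ such that for every x ∈ ℝⁿ with (Ax)₁ ≠ 0 and every t₀ valid for x, Ψ(x) = φ(invRep(x; t₀)). -/
open Matrix NormedSpace

noncomputable section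

/-- `R(t)`: the 2×2 rotation matrix. -/
def R2 (t : ℝ) : Matrix (Fin 2) (Fin 2) ℝ :=
  !![Real.cos t, -Real.sin t; Real.sin t, Real.cos t]

/-- `J`: the 2×2 matrix with rows (0, -1) and (1, 0). -/
def Jmat : Matrix (Fin 2) (Fin 2) ℝ := !![0, -1; 1, 0]

/-- Index type for `ℝⁿ` with `n = 2M`: component `2(i-1)+p` of block `i` is indexed `(p, i)`. -/
abbrev Idx (M : ℕ) := Fin 2 × Fin M

/-- `SO(n)` for `n = 2M`, on the block index type. -/
def SOb (M : ℕ) : Set (Matrix (Idx M) (Idx M) ℝ) :=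
  {A | Aᵀ * A = 1 ∧ A.det = 1}

/-- The block-diagonal matrix `⊕ᵢ Cᵢ`. -/
def bdiag {M : ℕ} (C : Fin M → Matrix (Fin 2) (Fin 2) ℝ) : Matrix (Idx M) (Idx M) ℝ :=
  Matrix.blockDiagonal C

/-- The `i`-th 2-dimensional block `vᵢ` of a vector `v ∈ ℝⁿ`. -/
def blk {M : ℕ} (v : Idx M → ℝ) (i : Fin M) : Fin 2 → ℝ := fun p => v (p, i)

/-- Concatenation `u₁ ⊕ ⋯ ⊕ u_M` of 2-dimensional blocks. -/
def cat {M : ℕ} (u : Fin M → (Fin 2 → ℝ)) : Idx M → ℝ := fun pi => u pi.2 pi.1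

/-- `e₁ = (1, 0) ∈ ℝ²`. -/
def e1 : Fin 2 → ℝ := ![1, 0]

/-- The Euclidean norm `‖u‖₂` of `u ∈ ℝ²`. -/
def norm2 (u : Fin 2 → ℝ) : ℝ := Real.sqrt (u 0 ^ 2 + u 1 ^ 2)

/-- `t₀` is valid for `x` (w.r.t. `A`, `λ`): `R(t₀λ₁)e₁ = v₁/‖v₁‖₂` where `v = Ax`. -/
def valid {M : ℕ} [NeZero M] (A : Matrix (Idx M) (Idx M) ℝ) (lam : Fin M → ℝ)
    (x : Idx M → ℝ) (t₀ : ℝ) : Prop :=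
  (R2 (t₀ * lam 0)).mulVec e1 = (norm2 (blk (A.mulVec x) 0))⁻¹ • blk (A.mulVec x) 0

/-- `invRep(x; t₀) = ‖v₁‖₂ e₁ ⊕ R(−t₀λ₂)v₂ ⊕ ⋯ ⊕ R(−t₀λ_M)v_M`, where `v = Ax`. -/
def invRep {M : ℕ} [NeZero M] (A : Matrix (Idx M) (Idx M) ℝ) (lam : Fin M → ℝ)
    (x : Idx M → ℝ) (t₀ : ℝ) : Idx M → ℝ :=
  cat (fun i =>
    if i = 0 then norm2 (blk (A.mulVec x) 0) • e1
    else (R2 (-(t₀ * lam i))).mulVec (blk (A.mulVec x) i))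

section Aux

/-- Realization of `ℂ` as 2×2 real matrices, as a ring homomorphism. -/
def cmatHom : ℂ →+* Matrix (Fin 2) (Fin 2) ℝ where
  toFun z := !![z.re, -z.im; z.im, z.re]
  map_one' := by ext i j; fin_cases i <;> fin_cases j <;> simp [Matrix.one_apply]
  map_mul' z w := by
    ext i j; fin_cases i <;> fin_cases j <;>
      simp [Matrix.mul_apply, Fin.sum_univ_two, Complex.mul_re, Complex.mul_im] <;> ring
  map_zero' := by ext i j; fin_cases i <;> fin_cases j <;> simp
  map_add' z w := by ext i j; fin_cases i <;> fin_cases j <;> simp <;> ring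

lemma cmatHom_cont : Continuous cmatHom := by
  apply continuous_matrix
  intro i j; fin_cases i <;> fin_cases j <;> simp [cmatHom] <;> fun_prop

lemma exp_smul_J (a : ℝ) : exp (a • Jmat) = R2 a := by
  letI : SeminormedRing (Matrix (Fin 2) (Fin 2) ℝ) := Matrix.linftyOpSemiNormedRing
  letI : NormedRing (Matrix (Fin 2) (Fin 2) ℝ) := Matrix.linftyOpNormedRing
  letI : NormedAlgebra ℝ (Matrix (Fin 2) (Fin 2) ℝ) := Matrix.linftyOpNormedAlgebra
  have h1 : cmatHom ((a : ℂ) * Complex.I) = a • Jmat := by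
    ext i j; fin_cases i <;> fin_cases j <;> simp [cmatHom, Jmat]
  have h2 := map_exp cmatHom cmatHom_cont ((a : ℂ) * Complex.I)
  rw [h1] at h2
  refine h2.symm.trans ?_
  have h3 : exp ((a : ℂ) * Complex.I) = Complex.exp ((a:ℂ) * Complex.I) := by
    rw [Complex.exp_eq_exp_ℂ]
  rw [h3]
  ext i j; fin_cases i <;> fin_cases j <;>
    simp [cmatHom, R2, Complex.exp_ofReal_mul_I_re, Complex.exp_ofReal_mul_I_im]

lemma bdiag_mulVec {M : ℕ} (C : Fin M → Matrix (Fin 2) (Fin 2) ℝ) (v : Idx M → ℝ) :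
    (bdiag C).mulVec v = cat (fun i => (C i).mulVec (blk v i)) := by
  ext ⟨p, i⟩
  simp [bdiag, cat, blk, Matrix.mulVec, dotProduct, Fintype.sum_prod_type,
    Matrix.blockDiagonal_apply, Finset.sum_comm (γ := Fin M), ite_mul,
    Finset.sum_ite_eq, Fin.sum_univ_two]

lemma R2_mul_R2 (s t : ℝ) : R2 s * R2 t = R2 (s + t) := by
  ext i j
  fin_cases i <;> fin_cases j <;>
    simp [R2, Matrix.mul_apply, Fin.sum_univ_two, Real.cos_add, Real.sin_add] <;> ring

lemma R2_zero : R2 0 = 1 := by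
  ext i j; fin_cases i <;> fin_cases j <;> simp [R2, Matrix.one_apply]

lemma norm2_ne_zero {u : Fin 2 → ℝ} (hu : u ≠ 0) : norm2 u ≠ 0 := by
  have h : u 0 ^ 2 + u 1 ^ 2 > 0 := by
    rcases (Function.ne_iff.mp hu) with ⟨p, hp⟩
    fin_cases p <;>
    · simp only [Pi.zero_apply] at hp
      positivity
  simp only [norm2]
  positivity

end Aux

/-- If `Ψ(exp(tB)x) = Ψ(x)` for all `t, x`, then there is `φ : ℝⁿ → ℝᵐ`
with `Ψ(x) = φ(invRep(x; t₀))` for every `x` with `(Ax)₁ ≠ 0` and every valid `t₀`. -/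

theorem stmt7 (M : ℕ) [NeZero M] (m : ℕ) (A : Matrix (Idx M) (Idx M) ℝ) (hA : A ∈ SOb M)
    (lam : Fin M → ℝ) (B : Matrix (Idx M) (Idx M) ℝ)
    (hB : B = Aᵀ * bdiag (fun i => lam i • Jmat) * A)
    (Ψ : (Idx M → ℝ) → (Fin m → ℝ))
    (hΨ : ∀ (t : ℝ) (x : Idx M → ℝ), Ψ ((exp (t • B)).mulVec x) = Ψ x) :
    ∃ φ : (Idx M → ℝ) → (Fin m → ℝ),
      ∀ x : Idx M → ℝ, blk (A.mulVec x) 0 ≠ 0 →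
        ∀ t₀ : ℝ, valid A lam x t₀ → Ψ x = φ (invRep A lam x t₀) := by
  obtain ⟨hAo, hdet⟩ := hA
  have hUnit : IsUnit Aᵀ :=
    (Matrix.isUnit_iff_isUnit_det _).mpr (by rw [Matrix.det_transpose, hdet]; exact isUnit_one)
  have hinv : Aᵀ⁻¹ = A := Matrix.inv_eq_right_inv hAo
  have hexp : ∀ t : ℝ, exp (t • B) = Aᵀ * bdiag (fun i => R2 (t * lam i)) * A := by
    intro t
    have h1 : t • B = Aᵀ * bdiag (fun i => (t * lam i) • Jmat) * Aᵀ⁻¹ := by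
      rw [hinv, hB, ← smul_mul_assoc, ← mul_smul_comm]
      congr 2
      have hfun : (t • fun i => lam i • Jmat) = fun i => (t * lam i) • Jmat :=
        funext fun i => by rw [Pi.smul_apply, smul_smul]
      rw [bdiag, bdiag, ← Matrix.blockDiagonal_smul, hfun]
    rw [h1, Matrix.exp_conj _ _ hUnit, hinv]
    congr 2
    rw [bdiag, bdiag, Matrix.exp_blockDiagonal]
    letI : SeminormedRing (Matrix (Fin 2) (Fin 2) ℝ) := Matrix.linftyOpSemiNormedRing
    letI : NormedRing (Matrix (Fin 2) (Fin 2) ℝ) := Matrix.linftyOpNormedRing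
    letI : NormedAlgebra ℝ (Matrix (Fin 2) (Fin 2) ℝ) := Matrix.linftyOpNormedAlgebra
    letI : NormedAlgebra ℚ (Matrix (Fin 2) (Fin 2) ℝ) := Matrix.linftyOpNormedAlgebra
    exact congrArg Matrix.blockDiagonal
      (funext fun i => (Pi.coe_exp _ i).trans (exp_smul_J (t * lam i)))
  refine ⟨fun y => Ψ (Aᵀ.mulVec y), ?_⟩
  intro x hx t₀ hval
  have harg : ∀ i : Fin M, (if i = 0 then norm2 (blk (A.mulVec x) 0) • e1
      else (R2 (-(t₀ * lam i))).mulVec (blk (A.mulVec x) i))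
      = (R2 ((-t₀) * lam i)).mulVec (blk (A.mulVec x) i) := by
    intro i
    by_cases hi : i = 0
    · rw [if_pos hi, hi]
      unfold valid at hval
      set s := t₀ * lam 0 with hs
      set v0 := blk (A.mulVec x) 0 with hv0
      have hc : norm2 v0 ≠ 0 := norm2_ne_zero hx
      have h2 := congrArg (fun u => (R2 (-s)).mulVec u) hval
      simp only [Matrix.mulVec_mulVec, R2_mul_R2, neg_add_cancel, R2_zero,
        Matrix.one_mulVec, Matrix.mulVec_smul] at h2
      have h3 := congrArg (fun u => norm2 v0 • u) h2
      simp only [smul_smul, mul_inv_cancel₀ hc, one_smul] at h3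
      rw [h3, neg_mul]
    · rw [if_neg hi, neg_mul]
  have hIR : invRep A lam x t₀ = (bdiag (fun i => R2 ((-t₀) * lam i))).mulVec (A.mulVec x) := by
    rw [bdiag_mulVec]
    unfold invRep
    exact congrArg cat (funext harg)
  have key : Aᵀ.mulVec (invRep A lam x t₀) = (exp ((-t₀) • B)).mulVec x := by
    rw [hIR, hexp, Matrix.mulVec_mulVec, Matrix.mulVec_mulVec]
  show Ψ x = Ψ (Aᵀ.mulVec (invRep A lam x t₀))
  rw [key, hΨ]
end
end

section
/- Let n = 2M, let A be an invertible real n×n matrix, λ ∈ ℝᴹ with λ₁ ≠ 0, and L = A⁻¹(⊕ᵢ λᵢ K)A. Let x ∈ ℝⁿ with v = Ax satisfying |v_{1,2}| < |v_{1,1}|, and for s ∈ ℝ set x' = exp(sL)x and v' = Ax'. Then v'ᵢ = H(sλᵢ)vᵢ for every i, |v'_{1,2}| < |v'_{1,1}|, sgn(v'_{1,1}) = sgn(v_{1,1}), v'_{1,1}² − v'_{1,2}² = v_{1,1}² − v_{1,2}², artanh(v'_{1,2}/v'_{1,1})/λ₁ = s + artanh(v_{1,2}/v_{1,1})/λ₁,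 and invRep_h(x') = invRep_h(x). -/
open Matrix NormedSpace

noncomputable section

/-- `H(t)`: the 2×2 hyperbolic rotation with rows (cosh t, sinh t), (sinh t, cosh t). -/
def Hyp (t : ℝ) : Matrix (Fin 2) (Fin 2) ℝ :=
  !![Real.cosh t, Real.sinh t; Real.sinh t, Real.cosh t]

/-- `G(t)`: the 2×2 shear with rows (1, t), (0, 1). -/
def Gm (t : ℝ) : Matrix (Fin 2) (Fin 2) ℝ := !![1, t; 0, 1]

/-- `K`: rows (0, 1), (1, 0). -/
def Kmat : Matrix (Fin 2) (Fin 2) ℝ := !![0, 1; 1, 0]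

/-- `N`: rows (0, 1), (0, 0). -/
def Nmat : Matrix (Fin 2) (Fin 2) ℝ := !![0, 1; 0, 0]

/-- `e₂ = (0, 1) ∈ ℝ²`. -/
def e2 : Fin 2 → ℝ := ![0, 1]

/-- The inverse hyperbolic tangent. -/
def artanh (x : ℝ) : ℝ := Real.log ((1 + x) / (1 - x)) / 2

/-- `t₀` is valid for `x` (elliptic case): `R(t₀λ₁)e₁ = v₁/‖v₁‖₂` where `v = Ax`. -/
def validE {M : ℕ} [NeZero M] (A : Matrix (Idx M) (Idx M) ℝ) (lam : Fin M → ℝ)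
    (x : Idx M → ℝ) (t₀ : ℝ) : Prop :=
  (R2 (t₀ * lam 0)).mulVec e1 = (norm2 (blk (A.mulVec x) 0))⁻¹ • blk (A.mulVec x) 0

/-- `invRep_e(x; t₀) = ‖v₁‖₂ e₁ ⊕ R(−t₀λ₂)v₂ ⊕ ⋯ ⊕ R(−t₀λ_M)v_M`, where `v = Ax`. -/
def invRepE {M : ℕ} [NeZero M] (A : Matrix (Idx M) (Idx M) ℝ) (lam : Fin M → ℝ)
    (x : Idx M → ℝ) (t₀ : ℝ) : Idx M → ℝ :=
  cat (fun i =>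
    if i = 0 then norm2 (blk (A.mulVec x) 0) • e1
    else (R2 (-(t₀ * lam i))).mulVec (blk (A.mulVec x) i))

/-- The hyperbolic parameter `t₀ = artanh(v_{1,2}/v_{1,1})/λ₁`, where `v = Ax`. -/
def t0H {M : ℕ} [NeZero M] (A : Matrix (Idx M) (Idx M) ℝ) (lam : Fin M → ℝ)
    (x : Idx M → ℝ) : ℝ :=
  artanh (blk (A.mulVec x) 0 1 / blk (A.mulVec x) 0 0) / lam 0

/-- `invRep_h(x) = sgn(v_{1,1})√(v_{1,1}² − v_{1,2}²) e₁ ⊕ H(−t₀λ₂)v₂ ⊕ ⋯`, `v = Ax`. -/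
def invRepH {M : ℕ} [NeZero M] (A : Matrix (Idx M) (Idx M) ℝ) (lam : Fin M → ℝ)
    (x : Idx M → ℝ) : Idx M → ℝ :=
  cat (fun i =>
    if i = 0 then
      (Real.sign (blk (A.mulVec x) 0 0) *
        Real.sqrt (blk (A.mulVec x) 0 0 ^ 2 - blk (A.mulVec x) 0 1 ^ 2)) • e1
    else (Hyp (-(t0H A lam x * lam i))).mulVec (blk (A.mulVec x) i))

/-- The parabolic parameter `t₀ = v_{1,1}/(λ₁ v_{1,2})`, where `v = Ax`. -/
def t0P {M : ℕ} [NeZero M] (A : Matrix (Idx M) (Idx M) ℝ) (lam : Fin M → ℝ)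
    (x : Idx M → ℝ) : ℝ :=
  blk (A.mulVec x) 0 0 / (lam 0 * blk (A.mulVec x) 0 1)

/-- `invRep_p(x) = v_{1,2} e₂ ⊕ G(−t₀λ₂)v₂ ⊕ ⋯ ⊕ G(−t₀λ_M)v_M`, where `v = Ax`. -/
def invRepP {M : ℕ} [NeZero M] (A : Matrix (Idx M) (Idx M) ℝ) (lam : Fin M → ℝ)
    (x : Idx M → ℝ) : Idx M → ℝ :=
  cat (fun i =>
    if i = 0 then blk (A.mulVec x) 0 1 • e2
    else (Gm (-(t0P A lam x * lam i))).mulVec (blk (A.mulVec x) i))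

def Cmat : Matrix (Fin 2) (Fin 2) ℝ := !![1, 1; 1, -1]

lemma Cmat_det : IsUnit Cmat.det := by
  rw [Cmat, Matrix.det_fin_two_of]; norm_num

lemma Hyp_mul (a b : ℝ) : Hyp a * Hyp b = Hyp (a + b) := by
  ext i j
  fin_cases i <;> fin_cases j <;>
    simp [Hyp, Matrix.mul_apply, Fin.sum_univ_two, Real.cosh_add, Real.sinh_add] <;> ring

lemma conj_helper {n : Type*} [Fintype n] [DecidableEq n] {C X D : Matrix n n ℝ}
    (hC : IsUnit C.det) (h : X * C = C * D) : X = C * D * C⁻¹ := by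
  calc X = X * (C * C⁻¹) := by rw [Matrix.mul_nonsing_inv C hC, Matrix.mul_one]
  _ = (X * C) * C⁻¹ := by rw [Matrix.mul_assoc]
  _ = C * D * C⁻¹ := by rw [h]

lemma Kmat_diag (t : ℝ) : (t • Kmat) * Cmat = Cmat * Matrix.diagonal ![t, -t] := by
  ext i j
  fin_cases i <;> fin_cases j <;>
    simp [Cmat, Kmat, Matrix.mul_apply, Fin.sum_univ_two, Matrix.diagonal]

lemma Hyp_diag (t : ℝ) : Hyp t * Cmat = Cmat * Matrix.diagonal ![Real.exp t, Real.exp (-t)] := by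
  ext i j
  fin_cases i <;> fin_cases j <;>
    simp [Cmat, Hyp, Matrix.mul_apply, Fin.sum_univ_two, Matrix.diagonal,
      Real.cosh_eq, Real.sinh_eq] <;> ring

lemma diag_eq_bdiag {M : ℕ} (d : Fin M → Fin 2 → ℝ) :
    Matrix.diagonal (fun pi : Idx M => d pi.2 pi.1) =
      bdiag (fun i => Matrix.diagonal (d i)) := by
  ext ⟨p, i⟩ ⟨q, j⟩
  by_cases hij : i = j
  · subst hij
    by_cases hpq : p = q
    · subst hpq; simp [Matrix.diagonal_apply, bdiag, Matrix.blockDiagonal_apply]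
    · simp [Matrix.diagonal_apply, bdiag, Matrix.blockDiagonal_apply, hpq, Prod.ext_iff]
  · simp [Matrix.diagonal_apply, bdiag, Matrix.blockDiagonal_apply, hij, Prod.ext_iff]

lemma exp_bdiag_K {M : ℕ} (t : Fin M → ℝ) :
    exp (bdiag (fun i => t i • Kmat)) = bdiag (fun i => Hyp (t i)) := by
  set Cb : Matrix (Idx M) (Idx M) ℝ := bdiag (fun _ => Cmat) with hCb
  have hCbdet : IsUnit Cb.det := by
    rw [hCb, bdiag, Matrix.det_blockDiagonal]
    have hd : Cmat.det = -2 := by rw [Cmat, Matrix.det_fin_two_of]; norm_num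
    rw [hd, Finset.prod_const]
    exact isUnit_iff_ne_zero.mpr (pow_ne_zero _ (by norm_num))
  have h1 : bdiag (fun i => t i • Kmat) =
      Cb * Matrix.diagonal (fun pi : Idx M => ![t pi.2, -(t pi.2)] pi.1) * Cb⁻¹ := by
    refine conj_helper hCbdet ?_
    rw [diag_eq_bdiag (fun i => ![t i, -(t i)]), hCb, bdiag, bdiag, bdiag,
      ← Matrix.blockDiagonal_mul, ← Matrix.blockDiagonal_mul]
    exact congrArg _ (funext fun i => Kmat_diag (t i))
  have h2 : bdiag (fun i => Hyp (t i)) =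
      Cb * Matrix.diagonal (fun pi : Idx M => ![Real.exp (t pi.2), Real.exp (-(t pi.2))] pi.1)
        * Cb⁻¹ := by
    refine conj_helper hCbdet ?_
    rw [diag_eq_bdiag (fun i => ![Real.exp (t i), Real.exp (-(t i))]), hCb, bdiag, bdiag, bdiag,
      ← Matrix.blockDiagonal_mul, ← Matrix.blockDiagonal_mul]
    exact congrArg _ (funext fun i => Hyp_diag (t i))
  have hU : IsUnit Cb := by rwa [Matrix.isUnit_iff_isUnit_det]
  have h3 : exp (fun pi : Idx M => ![t pi.2, -(t pi.2)] pi.1) =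
      fun pi : Idx M => ![Real.exp (t pi.2), Real.exp (-(t pi.2))] pi.1 := by
    funext pi
    rw [Pi.coe_exp, ← Real.exp_eq_exp_ℝ]
    obtain ⟨p, i⟩ := pi
    fin_cases p <;> simp
  rw [h1, Matrix.exp_conj Cb _ hU, Matrix.exp_diagonal, h3, h2]

lemma blk_bdiag {M : ℕ} (C : Fin M → Matrix (Fin 2) (Fin 2) ℝ) (v : Idx M → ℝ) (i : Fin M) :
    blk ((bdiag C).mulVec v) i = (C i).mulVec (blk v i) := by
  funext p
  simp only [blk, bdiag, Matrix.mulVec, dotProduct]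
  rw [Fintype.sum_prod_type]
  simp [Matrix.blockDiagonal_apply, ite_mul, zero_mul, Finset.sum_ite_eq, Finset.sum_ite_eq']


/-- **Hyperbolic invariance of `invRep_h`.** With `x' = exp(sL)x`, `v' = Ax'`:
`v'ᵢ = H(sλᵢ)vᵢ` for all `i`, `|v'_{1,2}| < |v'_{1,1}|`, `sgn(v'_{1,1}) = sgn(v_{1,1})`,
`v'_{1,1}² − v'_{1,2}² = v_{1,1}² − v_{1,2}²`,
`artanh(v'_{1,2}/v'_{1,1})/λ₁ = s + artanh(v_{1,2}/v_{1,1})/λ₁`, and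
`invRep_h(x') = invRep_h(x)`. -/
theorem stmt14 (M : ℕ) [NeZero M] (A : Matrix (Idx M) (Idx M) ℝ) (hA : IsUnit A)
    (lam : Fin M → ℝ) (hlam : lam 0 ≠ 0)
    (L : Matrix (Idx M) (Idx M) ℝ)
    (hL : L = A⁻¹ * bdiag (fun i => lam i • Kmat) * A)
    (x : Idx M → ℝ) (hv : |blk (A.mulVec x) 0 1| < |blk (A.mulVec x) 0 0|)
    (s : ℝ) (x' : Idx M → ℝ) (hx' : x' = (exp (s • L)).mulVec x) :
    (∀ i : Fin M, blk (A.mulVec x') i = (Hyp (s * lam i)).mulVec (blk (A.mulVec x) i)) ∧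
      |blk (A.mulVec x') 0 1| < |blk (A.mulVec x') 0 0| ∧
      Real.sign (blk (A.mulVec x') 0 0) = Real.sign (blk (A.mulVec x) 0 0) ∧
      blk (A.mulVec x') 0 0 ^ 2 - blk (A.mulVec x') 0 1 ^ 2 =
        blk (A.mulVec x) 0 0 ^ 2 - blk (A.mulVec x) 0 1 ^ 2 ∧
      artanh (blk (A.mulVec x') 0 1 / blk (A.mulVec x') 0 0) / lam 0 =
        s + artanh (blk (A.mulVec x) 0 1 / blk (A.mulVec x) 0 0) / lam 0 ∧
      invRepH A lam x' = invRepH A lam x := by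
  have hAd : IsUnit A.det := (Matrix.isUnit_iff_isUnit_det A).mp hA
  have hpart1 : ∀ i : Fin M,
      blk (A.mulVec x') i = (Hyp (s * lam i)).mulVec (blk (A.mulVec x) i) := by
    have hexp : exp (s • L) = A⁻¹ * bdiag (fun i => Hyp (s * lam i)) * A := by
      have h1 : s • L = A⁻¹ * bdiag (fun i => (s * lam i) • Kmat) * A := by
        have hfun : (s • fun i => lam i • Kmat) = fun i => (s * lam i) • Kmat := by
          funext i; rw [Pi.smul_apply, smul_smul]
        rw [hL, ← Matrix.smul_mul, ← Matrix.mul_smul, bdiag, bdiag,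
          ← Matrix.blockDiagonal_smul, hfun]
      rw [h1, Matrix.exp_conj' A _ hA, exp_bdiag_K]
    have hv' : A.mulVec x' = (bdiag (fun i => Hyp (s * lam i))).mulVec (A.mulVec x) := by
      rw [hx', hexp, Matrix.mulVec_mulVec, ← Matrix.mul_assoc, ← Matrix.mul_assoc,
        Matrix.mul_nonsing_inv A hAd, Matrix.one_mul, ← Matrix.mulVec_mulVec]
    intro i
    rw [hv', blk_bdiag]
  set t := s * lam 0 with htdef
  set a := blk (A.mulVec x) 0 0 with hadef
  set b := blk (A.mulVec x) 0 1 with hbdef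
  set a' := blk (A.mulVec x') 0 0 with ha'def
  set b' := blk (A.mulVec x') 0 1 with hb'def
  have ha' : a' = Real.cosh t * a + Real.sinh t * b := by
    rw [ha'def, hpart1 0, hadef, hbdef, htdef]
    simp [Hyp, Matrix.mulVec, dotProduct, Fin.sum_univ_two]
  have hb' : b' = Real.sinh t * a + Real.cosh t * b := by
    rw [hb'def, hpart1 0, hadef, hbdef, htdef]
    simp [Hyp, Matrix.mulVec, dotProduct, Fin.sum_univ_two]
  have hch : 0 < Real.cosh t := Real.cosh_pos (x := t)
  have hs2 : Real.cosh t ^ 2 - Real.sinh t ^ 2 = 1 := Real.cosh_sq_sub_sinh_sq t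
  have hep : 0 < Real.cosh t + Real.sinh t := by
    rw [Real.cosh_add_sinh]; exact Real.exp_pos t
  have hem : 0 < Real.cosh t - Real.sinh t := by
    rw [Real.cosh_sub_sinh]; exact Real.exp_pos (-t)
  have hsq : a' ^ 2 - b' ^ 2 = a ^ 2 - b ^ 2 := by
    rw [ha', hb']; linear_combination (a ^ 2 - b ^ 2) * hs2
  have hb2 : b ^ 2 < a ^ 2 := by
    nlinarith [mul_self_lt_mul_self (abs_nonneg b) hv, sq_abs a, sq_abs b]
  have hb'2 : b' ^ 2 < a' ^ 2 := by linarith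
  have hconj2 : |b'| < |a'| := by
    refine abs_lt.mpr (abs_lt_of_sq_lt_sq' ?_ (abs_nonneg a'))
    rwa [sq_abs]
  have ha0 : a ≠ 0 := by
    intro h; rw [h, abs_zero] at hv; exact (abs_nonneg b).not_gt hv
  have ha0' : a' ≠ 0 := by
    intro h; rw [h, abs_zero] at hconj2; exact (abs_nonneg b').not_gt hconj2
  have hexp1 : a' + b' = (Real.cosh t + Real.sinh t) * (a + b) := by
    rw [ha', hb']; ring
  have hexp2 : a' - b' = (Real.cosh t - Real.sinh t) * (a - b) := by
    rw [ha', hb']; ring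
  have hsgn : Real.sign a' = Real.sign a := by
    rcases ha0.lt_or_gt with hneg | hpos
    · have habs : |b| < -a := by rwa [abs_of_neg hneg] at hv
      obtain ⟨hb1, hb2'⟩ := abs_lt.mp habs
      have h1 : a' + b' < 0 := by
        rw [hexp1]; exact mul_neg_of_pos_of_neg hep (by linarith)
      have h2 : a' - b' < 0 := by
        rw [hexp2]; exact mul_neg_of_pos_of_neg hem (by linarith)
      rw [Real.sign_of_neg (by linarith : a' < 0), Real.sign_of_neg hneg]
    · have habs : |b| < a := by rwa [abs_of_pos hpos] at hv
      obtain ⟨hb1, hb2'⟩ := abs_lt.mp habs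
      have h1 : 0 < a' + b' := by
        rw [hexp1]; exact mul_pos hep (by linarith)
      have h2 : 0 < a' - b' := by
        rw [hexp2]; exact mul_pos hem (by linarith)
      rw [Real.sign_of_pos (by linarith : 0 < a'), Real.sign_of_pos hpos]
  have hab1 : a + b ≠ 0 := by
    intro h
    have : a = -b := by linarith
    rw [this] at hb2; nlinarith
  have hab2 : a - b ≠ 0 := by
    intro h
    have : a = b := by linarith
    rw [this] at hb2; nlinarith
  have hab1' : a' + b' ≠ 0 := by rw [hexp1]; exact mul_ne_zero (ne_of_gt hep) hab1
  have hab2' : a' - b' ≠ 0 := by rw [hexp2]; exact mul_ne_zero (ne_of_gt hem) hab2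
  have e1' : a' + b' = Real.exp t * (a + b) := by rw [hexp1, Real.cosh_add_sinh]
  have e2' : a' - b' = Real.exp (-t) * (a - b) := by rw [hexp2, Real.cosh_sub_sinh]
  have frac : ∀ (u w : ℝ), u ≠ 0 → (1 + w / u) / (1 - w / u) = (u + w) / (u - w) := by
    intro u w hu
    have h1 : 1 + w / u = (u + w) / u := by rw [add_div, div_self hu]
    have h2 : 1 - w / u = (u - w) / u := by rw [sub_div, div_self hu]
    rw [h1, h2, div_div_div_cancel_right₀]
    exact hu
  have hart : artanh (b' / a') = t + artanh (b / a) := by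
    have hkey : (a' + b') / (a' - b') = Real.exp (2 * t) * ((a + b) / (a - b)) := by
      rw [e1', e2', mul_div_mul_comm, ← Real.exp_sub, show t - -t = 2 * t by ring]
    rw [artanh, artanh, frac a' b' ha0', frac a b ha0, hkey,
      Real.log_mul (Real.exp_ne_zero _) (div_ne_zero hab1 hab2), Real.log_exp]
    ring
  have conj5 : artanh (b' / a') / lam 0 = s + artanh (b / a) / lam 0 := by
    rw [hart, htdef, add_div, mul_div_cancel_right₀ s hlam]
  refine ⟨hpart1, hconj2, hsgn, hsq, conj5, ?_⟩
  have ht0 : t0H A lam x' = s + t0H A lam x := by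
    simp only [t0H]
    rw [← ha'def, ← hb'def, ← hadef, ← hbdef]
    exact conj5
  funext pi
  obtain ⟨p, i⟩ := pi
  simp only [invRepH, cat]
  by_cases hi : i = 0
  · subst hi
    rw [if_pos rfl, if_pos rfl, ← ha'def, ← hb'def, ← hadef, ← hbdef, hsgn, hsq]
  · rw [if_neg hi, if_neg hi, ht0, hpart1 i, Matrix.mulVec_mulVec, Hyp_mul,
      show -((s + t0H A lam x) * lam i) + s * lam i = -(t0H A lam x * lam i) by ring]
end
end
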